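/- Let d be a distance function on a finite set X of size n. For s > 0, let G_s = (X, E_s) be the graph with edges {(x,y) : d(x,y) ≤ s} and let B(G_s) denote the set of bad triangles (triples with exactly two of three edges present). Then the sum over all triples of the three point condition equals the integral over s of the number of bad triangles: Σ_{x,y,z} tp(d;x,y,z) = ∫_0^∞ |B(G_s)| ds. -/

import Mathlib

noncomputable section

variable {Xt : Type*}

/-- Gromov product of `x,y` with base `w`. -/
def gp (d : Xt → Xt → ℝ) (w x y : Xt) : ℝ := (d x w + d y w - d x y) / 2

/-- One term of the four point condition. -/
def fpt (d : Xt → Xt → ℝ) (w x y z : Xt) : ℝ :=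
  min (gp d w x z) (gp d w y z) - gp d w x y

/-- Four point condition with base `w`: max over all permutations of the triple `x,y,z`. -/
def fp (d : Xt → Xt → ℝ) (w x y z : Xt) : ℝ :=
  max (max (max (fpt d w x y z) (fpt d w x z y)) (max (fpt d w y x z) (fpt d w y z x)))
      (max (fpt d w z x y) (fpt d w z y x))

/-- One term of the three point condition. -/
def tpt (d : Xt → Xt → ℝ) (x y z : Xt) : ℝ := d x z - max (d x y) (d y z)

/-- Three point condition: max over all permutations of `x,y,z`. -/
def tp (d : Xt → Xt → ℝ) (x y z : Xt) : ℝ :=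
  max (max (max (tpt d x y z) (tpt d x z y)) (max (tpt d y x z) (tpt d y z x)))
      (max (tpt d z x y) (tpt d z y x))

open MeasureTheory

lemma cond_iff (a b c s : ℝ) :
    ((if a ≤ s then 1 else 0) + (if b ≤ s then 1 else 0) + (if c ≤ s then 1 else 0) = (2:ℕ)) ↔
    (min (max a b) (min (max b c) (max a c)) ≤ s ∧ s < max a (max b c)) := by
  by_cases ha : a ≤ s <;> by_cases hb : b ≤ s <;> by_cases hc : c ≤ s <;>
    simp [ha, hb, hc, min_le_iff, le_max_iff, max_le_iff, le_min_iff, lt_min_iff, max_lt_iff,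
      lt_max_iff, min_lt_iff, not_le.mp, not_and, not_lt, not_or]

lemma maxmin_eq (a b c : ℝ) :
    max (max (c - max a b) (a - max b c)) (b - max a c) =
      max a (max b c) - min (max a b) (min (max b c) (max a c)) := by
  rcases le_total a b with h1 | h1 <;> rcases le_total b c with h2 | h2 <;>
    rcases le_total a c with h3 | h3 <;>
    simp [max_def, min_def, h1, h2, h3] <;>
    first
      | linarith
      | (intro h; linarith)
      | (split_ifs <;> first | linarith | (intro h; linarith))

lemma max6 (t1 t2 t3 : ℝ) :
    max (max (max t1 t2) (max t3 t2)) (max t3 t1) = max (max t1 t2) t3 := by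
  rcases le_total t1 t2 with h1 | h1 <;> rcases le_total t2 t3 with h2 | h2 <;>
    rcases le_total t1 t3 with h3 | h3 <;>
    simp [max_def, h1, h2, h3] <;>
    first
      | linarith
      | (intro h; linarith)
      | (split_ifs <;> first | linarith | (intro h; linarith))

lemma ind_eq (m M : ℝ) : (fun s : ℝ => if m ≤ s ∧ s < M then (1:ℝ) else 0) =
    (Set.Ico m M).indicator (fun _ => (1:ℝ)) := by
  funext s
  by_cases h : m ≤ s ∧ s < M
  · rw [if_pos h, Set.indicator_of_mem (Set.mem_Ico.mpr h)]
  · rw [if_neg h, Set.indicator_of_notMem (fun hc => h (Set.mem_Ico.mp hc))]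

lemma integrable_ind (m M : ℝ) :
    Integrable (fun s : ℝ => if m ≤ s ∧ s < M then (1:ℝ) else 0)
      (volume.restrict (Set.Ioi 0)) := by
  rw [ind_eq]
  rw [integrable_indicator_iff measurableSet_Ico]
  refine (integrableOn_const_iff).mpr (Or.inr ?_)
  rw [Measure.restrict_apply measurableSet_Ico]
  exact lt_of_le_of_lt (measure_mono Set.inter_subset_left)
    (by rw [Real.volume_Ico]; exact ENNReal.ofReal_lt_top)

lemma integral_ind (m M : ℝ) (h0 : 0 ≤ m) (hM : m ≤ M) :
    ∫ s in Set.Ioi (0:ℝ), (if m ≤ s ∧ s < M then (1:ℝ) else 0) = M - m := by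
  rw [ind_eq, integral_indicator measurableSet_Ico, setIntegral_const, smul_eq_mul, mul_one,
    measureReal_def, Measure.restrict_apply measurableSet_Ico]
  have hvol : volume (Set.Ico m M ∩ Set.Ioi 0) = ENNReal.ofReal (M - m) := by
    rcases eq_or_lt_of_le h0 with h | h
    · have : Set.Ico m M ∩ Set.Ioi 0 = Set.Ioo 0 M := by
        ext x
        simp only [Set.mem_inter_iff, Set.mem_Ico, Set.mem_Ioi, Set.mem_Ioo, ← h]
        constructor
        · rintro ⟨⟨_, h2⟩, h3⟩; exact ⟨h3, h2⟩
        · rintro ⟨h1', h2⟩; exact ⟨⟨le_of_lt h1', h2⟩, h1'⟩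
      rw [this, Real.volume_Ioo, ← h]
    · have : Set.Ico m M ∩ Set.Ioi 0 = Set.Ico m M := by
        apply Set.inter_eq_left.mpr
        intro x hx; exact lt_of_lt_of_le h hx.1
      rw [this, Real.volume_Ico]
  rw [hvol, ENNReal.toReal_ofReal (by linarith)]


/-- Number of ordered triples of pairwise distinct points forming a bad triangle in the
`s`-neighbor graph `G_s` (each unordered bad triangle is counted 6 times). -/
def badCount {X : Type*} [Fintype X] [DecidableEq X] (d : X → X → ℝ) (s : ℝ) : ℕ :=
  (Finset.univ.filter (fun p : X × X × X =>
    p.1 ≠ p.2.1 ∧ p.2.1 ≠ p.2.2 ∧ p.1 ≠ p.2.2 ∧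
    ((if d p.1 p.2.1 ≤ s then 1 else 0) + (if d p.2.1 p.2.2 ≤ s then 1 else 0) +
      (if d p.2.2 p.1 ≤ s then 1 else 0) = (2 : ℕ)))).card

/-- The sum of the three point condition over all (ordered, pairwise distinct) triples equals
the integral over `s > 0` of the number of (ordered) bad triangles of `G_s`.
(Both sides count each unordered triple 6 times.) -/
theorem sum_tp_eq_integral_badCount {X : Type*} [Fintype X] [DecidableEq X]
    (d : X → X → ℝ) (hsym : ∀ x y, d x y = d y x) (hnn : ∀ x y, 0 ≤ d x y)
    (hdiag : ∀ x, d x x = 0) :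
    (∑ x : X, ∑ y : X, ∑ z : X,
        if x ≠ y ∧ y ≠ z ∧ x ≠ z then tp d x y z else 0) =
      ∫ s in Set.Ioi (0 : ℝ), (badCount d s : ℝ) := by
  classical
  -- per-triple real-valued condition function
  set F : X × X × X → ℝ → ℝ := fun p s =>
    if p.1 ≠ p.2.1 ∧ p.2.1 ≠ p.2.2 ∧ p.1 ≠ p.2.2 ∧
      ((if d p.1 p.2.1 ≤ s then 1 else 0) + (if d p.2.1 p.2.2 ≤ s then 1 else 0) +
        (if d p.2.2 p.1 ≤ s then 1 else 0) = (2 : ℕ)) then (1:ℝ) else 0 with hF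
  have hFeq : ∀ p : X × X × X, p.1 ≠ p.2.1 → p.2.1 ≠ p.2.2 → p.1 ≠ p.2.2 →
      F p = fun s => if min (max (d p.1 p.2.1) (d p.2.1 p.2.2))
          (min (max (d p.2.1 p.2.2) (d p.2.2 p.1)) (max (d p.1 p.2.1) (d p.2.2 p.1))) ≤ s ∧
          s < max (d p.1 p.2.1) (max (d p.2.1 p.2.2) (d p.2.2 p.1)) then (1:ℝ) else 0 := by
    intro p h1 h2 h3
    funext s
    rw [hF]
    simp only [h1, h2, h3, ne_eq, not_false_eq_true, true_and]
    exact if_congr (cond_iff _ _ _ _) rfl rfl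
  have hInt : ∀ p : X × X × X, Integrable (F p) (volume.restrict (Set.Ioi 0)) := by
    intro p
    by_cases h1 : p.1 ≠ p.2.1
    · by_cases h2 : p.2.1 ≠ p.2.2
      · by_cases h3 : p.1 ≠ p.2.2
        · rw [hFeq p h1 h2 h3]; exact integrable_ind _ _
        · have : F p = fun _ => 0 := by funext s; rw [hF]; simp [h3]
          rw [this]; exact integrable_zero _ _ _
      · have : F p = fun _ => 0 := by funext s; rw [hF]; simp [h2]
        rw [this]; exact integrable_zero _ _ _
    · have : F p = fun _ => 0 := by funext s; rw [hF]; simp [h1]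
      rw [this]; exact integrable_zero _ _ _
  have hbc : ∀ s : ℝ, (badCount d s : ℝ) = ∑ p : X × X × X, F p s := by
    intro s
    rw [badCount, Finset.card_filter, hF]
    push_cast
    exact Finset.sum_congr rfl fun p _ => if_congr Iff.rfl rfl rfl
  calc (∑ x : X, ∑ y : X, ∑ z : X,
        if x ≠ y ∧ y ≠ z ∧ x ≠ z then tp d x y z else 0)
      = ∑ x : X, ∑ y : X, ∑ z : X, ∫ s in Set.Ioi (0:ℝ), F (x, y, z) s := by
        refine Finset.sum_congr rfl fun x _ => Finset.sum_congr rfl fun y _ =>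
          Finset.sum_congr rfl fun z _ => ?_
        by_cases h : x ≠ y ∧ y ≠ z ∧ x ≠ z
        · rw [if_pos h, hFeq (x, y, z) h.1 h.2.1 h.2.2]
          rw [hsym z x]
          rw [integral_ind _ _
            (le_min (le_trans (hnn x y) (le_max_left _ _))
              (le_min (le_trans (hnn y z) (le_max_left _ _))
                (le_trans (hnn x y) (le_max_left _ _))))
            (le_trans (min_le_left _ _) (max_le_max le_rfl (le_max_left _ _)))]
          have e1 : tpt d x y z = d x z - max (d x y) (d y z) := rfl
          have e2 : tpt d x z y = d x y - max (d y z) (d x z) := by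
            simp only [tpt, hsym z y]; rw [max_comm (d x z) (d y z)]
          have e3 : tpt d y x z = d y z - max (d x y) (d x z) := by
            simp only [tpt, hsym y x]
          have e4 : tpt d y z x = d x y - max (d y z) (d x z) := by
            simp only [tpt, hsym y x, hsym z x]
          have e5 : tpt d z x y = d y z - max (d x y) (d x z) := by
            simp only [tpt, hsym z y, hsym z x]; rw [max_comm (d x z) (d x y)]
          have e6 : tpt d z y x = d x z - max (d x y) (d y z) := by
            simp only [tpt, hsym z x, hsym z y, hsym y x]; rw [max_comm (d y z) (d x y)]
          rw [tp, e1, e2, e3, e4, e5, e6, max6]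
          exact maxmin_eq _ _ _
        · rw [if_neg h]
          have : F (x, y, z) = fun _ => 0 := by
            funext s; rw [hF]
            simp only [ite_eq_right_iff]
            intro hc; exact absurd ⟨hc.1, hc.2.1, hc.2.2.1⟩ h
          rw [this]
          simp
    _ = ∑ p : X × X × X, ∫ s in Set.Ioi (0:ℝ), F p s := by
        rw [Fintype.sum_prod_type]
        refine Finset.sum_congr rfl fun x _ => ?_
        rw [Fintype.sum_prod_type]
    _ = ∫ s in Set.Ioi (0:ℝ), ∑ p : X × X × X, F p s := by
        rw [integral_finset_sum _ (fun p _ => hInt p)]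
    _ = ∫ s in Set.Ioi (0 : ℝ), (badCount d s : ℝ) := by
        refine integral_congr_ae (Filter.Eventually.of_forall fun s => ?_)
        exact (hbc s).symm
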